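/- Let ℬ be locally finitely presentable and B an object. The coslice generator 𝒢_B is closed under retracts in B↓ℬ: if l : B → C is a retract in B↓ℬ of an object of 𝒢_B, then l itself belongs to 𝒢_B. -/

import Mathlib

open CategoryTheory Limits Opposite

universe w v u

section Defs

variable {𝒞 : Type u} [Category.{v} 𝒞]

/-- An object `K` is finitely presented if `Hom(K, -)` preserves filtered colimits. -/
def IsFinPres (K : 𝒞) : Prop :=
  ∀ (J : Type v) (_ : SmallCategory J) (_ : IsFiltered J),
    Nonempty (PreservesColimitsOfShape J (coyoneda.obj (op K)))

/-- A category is locally finitely presentable if it is cocomplete and admits an essentially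
small family of finitely presented objects such that every object is a filtered colimit of
objects of this family. -/
class IsLFP (𝒞 : Type u) [Category.{v} 𝒞] extends HasColimits 𝒞 : Prop where
  exists_gen : ∃ S : Set 𝒞, Small.{v} S ∧ (∀ K ∈ S, IsFinPres K) ∧
    ∀ X : 𝒞, ∃ (J : Type v) (_ : SmallCategory J) (_ : IsFiltered J)
      (D : J ⥤ 𝒞) (c : Cocone D) (_ : Nonempty (IsColimit c)),
      c.pt = X ∧ ∀ j, D.obj j ∈ S

/-- `l : X ⟶ Y` belongs to the coslice generator `𝒢_X`: it is a pushout of a morphism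
between finitely presented objects along a map into `X`. -/
def InGen {X Y : 𝒞} (l : X ⟶ Y) : Prop :=
  ∃ (K K' : 𝒞) (_ : IsFinPres K) (_ : IsFinPres K') (k : K ⟶ K') (a : K ⟶ X)
    (c : K' ⟶ Y), IsPushout a k l c

end Defs

section Aux

variable {𝒞 : Type u} [Category.{v} 𝒞]

lemma factor_through_stage {J : Type v} [SmallCategory J] [IsFiltered J] {E : J ⥤ 𝒞}
    {cE : Cocone E} (hc : IsColimit cE) {P : 𝒞} (hP : IsFinPres P) (φ : P ⟶ cE.pt) :
    ∃ (j : J) (ψ : P ⟶ E.obj j), ψ ≫ cE.ι.app j = φ := by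
  obtain ⟨_⟩ := hP J inferInstance inferInstance
  have h := isColimitOfPreserves (coyoneda.obj (op P)) hc
  obtain ⟨j, y, hy⟩ := Types.jointly_surjective _ h φ
  exact ⟨j, y, hy⟩

lemma eq_at_stage {J : Type v} [SmallCategory J] [IsFiltered J] {E : J ⥤ 𝒞}
    {cE : Cocone E} (hc : IsColimit cE) {P : 𝒞} (hP : IsFinPres P) {j₁ j₂ : J}
    (g₁ : P ⟶ E.obj j₁) (g₂ : P ⟶ E.obj j₂)
    (h : g₁ ≫ cE.ι.app j₁ = g₂ ≫ cE.ι.app j₂) :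
    ∃ (j : J) (t₁ : j₁ ⟶ j) (t₂ : j₂ ⟶ j), g₁ ≫ E.map t₁ = g₂ ≫ E.map t₂ := by
  obtain ⟨_⟩ := hP J inferInstance inferInstance
  have hco := isColimitOfPreserves (coyoneda.obj (op P)) hc
  exact (Types.FilteredColimit.isColimit_eq_iff _ hco).mp h

end Aux

section Aux2

variable {𝒞 : Type u} [Category.{v} 𝒞]

lemma isFinPres_pushout [HasPushouts 𝒞] {K A K' : 𝒞} (hK : IsFinPres K) (hA : IsFinPres A)
    (hK' : IsFinPres K') (f : K ⟶ A) (g : K ⟶ K') : IsFinPres (pushout f g) := by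
  intro J sJ fJ
  refine ⟨⟨fun {E} => ⟨fun {cE} hcE => ⟨Types.FilteredColimit.isColimitOf
    (E ⋙ coyoneda.obj (op (pushout f g)))
    ((coyoneda.obj (op (pushout f g))).mapCocone cE) ?_ ?_⟩⟩⟩⟩
  · -- surjectivity
    intro φ
    obtain ⟨k1, α, hα⟩ := factor_through_stage hcE hA (pushout.inl f g ≫ φ)
    obtain ⟨k2, β, hβ⟩ := factor_through_stage hcE hK' (pushout.inr f g ≫ φ)
    obtain ⟨k4, t1, t2, ht⟩ := eq_at_stage hcE hK
      (f ≫ α ≫ E.map (IsFiltered.leftToMax k1 k2))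
      (g ≫ β ≫ E.map (IsFiltered.rightToMax k1 k2)) (by
        simp only [Category.assoc, Cocone.w]
        rw [hα, hβ, pushout.condition_assoc])
    refine ⟨k4, pushout.desc (α ≫ E.map (IsFiltered.leftToMax k1 k2 ≫ t1))
      (β ≫ E.map (IsFiltered.rightToMax k1 k2 ≫ t2))
      (by simpa only [Functor.map_comp, Category.assoc] using ht), ?_⟩
    show φ = _ ≫ cE.ι.app k4
    apply pushout.hom_ext
    · rw [pushout.inl_desc_assoc, Category.assoc, Functor.map_comp, Category.assoc, Cocone.w,
        Cocone.w, hα]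
    · rw [pushout.inr_desc_assoc, Category.assoc, Functor.map_comp, Category.assoc, Cocone.w,
        Cocone.w, hβ]
  · -- injectivity
    intro i j g₁ g₂ h
    have h' : g₁ ≫ cE.ι.app i = g₂ ≫ cE.ι.app j := h
    obtain ⟨kA, a1, a2, hA'⟩ := eq_at_stage hcE hA (pushout.inl f g ≫ g₁) (pushout.inl f g ≫ g₂)
      (by rw [Category.assoc, Category.assoc, h'])
    obtain ⟨kB, b1, b2, hB'⟩ := eq_at_stage hcE hK' (pushout.inr f g ≫ g₁) (pushout.inr f g ≫ g₂)
      (by rw [Category.assoc, Category.assoc, h'])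
    set u := IsFiltered.leftToMax kA kB with hu
    set v := IsFiltered.rightToMax kA kB with hv
    set w1 := IsFiltered.coeqHom (a1 ≫ u) (b1 ≫ v) with hw1
    set w2 := IsFiltered.coeqHom (a2 ≫ u ≫ w1) (b2 ≫ v ≫ w1) with hw2
    have hm1 : a1 ≫ u ≫ w1 ≫ w2 = b1 ≫ v ≫ w1 ≫ w2 := by
      have := congrArg (· ≫ w2) (IsFiltered.coeq_condition (a1 ≫ u) (b1 ≫ v))
      simpa only [Category.assoc] using this
    have hm2 : a2 ≫ u ≫ w1 ≫ w2 = b2 ≫ v ≫ w1 ≫ w2 := by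
      have := IsFiltered.coeq_condition (a2 ≫ u ≫ w1) (b2 ≫ v ≫ w1)
      simpa only [Category.assoc] using this
    refine ⟨_, a1 ≫ u ≫ w1 ≫ w2, a2 ≫ u ≫ w1 ≫ w2, ?_⟩
    show g₁ ≫ E.map (a1 ≫ u ≫ w1 ≫ w2) = g₂ ≫ E.map (a2 ≫ u ≫ w1 ≫ w2)
    apply pushout.hom_ext
    · simp only [Functor.map_comp, Category.assoc]
      rw [reassoc_of% hA']
    · rw [hm1, hm2]
      simp only [Functor.map_comp, Category.assoc]
      rw [reassoc_of% hB']

lemma isFinPres_coequalizer [HasColimits 𝒞] {A B : 𝒞} (hA : IsFinPres A) (hB : IsFinPres B)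
    (f g : A ⟶ B) : IsFinPres (coequalizer f g) := by
  intro J sJ fJ
  refine ⟨⟨fun {E} => ⟨fun {cE} hcE => ⟨Types.FilteredColimit.isColimitOf
    (E ⋙ coyoneda.obj (op (coequalizer f g)))
    ((coyoneda.obj (op (coequalizer f g))).mapCocone cE) ?_ ?_⟩⟩⟩⟩
  · -- surjectivity
    intro φ
    obtain ⟨k1, ψ, hψ⟩ := factor_through_stage hcE hB (coequalizer.π f g ≫ φ)
    obtain ⟨k2, t1, t2, ht⟩ := eq_at_stage hcE hA (f ≫ ψ) (g ≫ ψ) (by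
      rw [Category.assoc, Category.assoc, hψ, coequalizer.condition_assoc])
    have hcond : f ≫ ψ ≫ E.map (t1 ≫ IsFiltered.coeqHom t1 t2)
        = g ≫ ψ ≫ E.map (t1 ≫ IsFiltered.coeqHom t1 t2) := by
      conv_rhs => rw [IsFiltered.coeq_condition t1 t2]
      simp only [Functor.map_comp, Category.assoc]
      rw [reassoc_of% ht]
    refine ⟨_, coequalizer.desc (ψ ≫ E.map (t1 ≫ IsFiltered.coeqHom t1 t2)) hcond, ?_⟩
    show φ = _ ≫ cE.ι.app _
    apply coequalizer.hom_ext
    rw [coequalizer.π_desc_assoc, Category.assoc, Functor.map_comp, Category.assoc, Cocone.w,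
      Cocone.w, hψ]
  · -- injectivity
    intro i j g₁ g₂ h
    have h' : g₁ ≫ cE.ι.app i = g₂ ≫ cE.ι.app j := h
    obtain ⟨k, t1, t2, ht⟩ := eq_at_stage hcE hB (coequalizer.π f g ≫ g₁)
      (coequalizer.π f g ≫ g₂) (by rw [Category.assoc, Category.assoc, h'])
    refine ⟨k, t1, t2, ?_⟩
    show g₁ ≫ E.map t1 = g₂ ≫ E.map t2
    apply coequalizer.hom_ext
    simpa only [Category.assoc] using ht

end Aux2

section Stage

variable {𝒞 : Type u} [Category.{v} 𝒞] [HasPushouts 𝒞]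
variable {J : Type v} [SmallCategory J] (D : J ⥤ 𝒞)
variable {K K' : 𝒞} (k : K ⟶ K') {j₀ : J} (f : K ⟶ D.obj j₀)

/-- The stagewise pushouts of `k` along `f ≫ D.map j.hom`. -/
@[simps, reducible]
noncomputable def stageF : Under j₀ ⥤ 𝒞 where
  obj j := pushout (f ≫ D.map j.hom) k
  map {j j'} φ := pushout.desc (D.map φ.right ≫ pushout.inl _ _) (pushout.inr _ _) (by
    rw [Category.assoc, ← Functor.map_comp_assoc, Under.w φ, ← Category.assoc,
      pushout.condition])
  map_id j := by
    apply pushout.hom_ext <;> simp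
  map_comp {j j' j''} φ φ' := by
    apply pushout.hom_ext
    · rw [pushout.inl_desc, pushout.inl_desc_assoc, Category.assoc, pushout.inl_desc]
      simp
    · rw [pushout.inr_desc, pushout.inr_desc_assoc, pushout.inr_desc]

variable (cb : Cocone D) {Z : 𝒞} (l : cb.pt ⟶ Z) (c' : K' ⟶ Z)
variable (hpo : IsPushout (f ≫ cb.ι.app j₀) k l c')

/-- The cocone on the stagewise pushouts with apex the pushout along the colimit. -/
@[simps, reducible]
noncomputable def stageCocone : Cocone (stageF D k f) where
  pt := Z
  ι := {
    app := fun j => pushout.desc (cb.ι.app j.right ≫ l) c' (by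
      have hw : D.map j.hom ≫ cb.ι.app j.right = cb.ι.app j₀ := by simpa using cb.w j.hom
      rw [Category.assoc, ← Category.assoc (D.map j.hom), hw, ← Category.assoc]
      exact hpo.w)
    naturality := fun j j' φ => by
      dsimp
      apply pushout.hom_ext
      · rw [pushout.inl_desc_assoc, Category.assoc, pushout.inl_desc, Category.comp_id, pushout.inl_desc]
        simp
      · rw [pushout.inr_desc_assoc, pushout.inr_desc, Category.comp_id, pushout.inr_desc] }

/-- The auxiliary cocone on the restricted diagram induced by a cocone on stagewise
pushouts. -/
@[simps, reducible]
noncomputable def stageAuxCocone (t : Cocone (stageF D k f)) :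
    Cocone (Under.forget j₀ ⋙ D) where
  pt := t.pt
  ι := {
    app := fun j => pushout.inl _ _ ≫ t.ι.app j
    naturality := fun j j' φ => by
      dsimp
      rw [Category.comp_id, ← t.w φ, ← Category.assoc, ← Category.assoc]
      congr 1
      rw [pushout.inl_desc] }

variable [IsFiltered J]

noncomputable def stageIsColimit (hcb : IsColimit cb) :
    IsColimit (stageCocone D k f cb l c' hpo) := by
  have hres : IsColimit (cb.whisker (Under.forget j₀)) :=
    (Functor.Final.isColimitWhiskerEquiv (Under.forget j₀) cb).symm hcb
  have hcomm : ∀ t : Cocone (stageF D k f),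
      (f ≫ cb.ι.app j₀) ≫ hres.desc (stageAuxCocone D k f t)
        = k ≫ pushout.inr _ _ ≫ t.ι.app (Under.mk (𝟙 j₀)) := by
    intro t
    have h1 : cb.ι.app j₀ ≫ hres.desc (stageAuxCocone D k f t)
        = pushout.inl (f ≫ D.map (Under.mk (𝟙 j₀)).hom) k ≫ t.ι.app (Under.mk (𝟙 j₀)) :=
      hres.fac (stageAuxCocone D k f t) (Under.mk (𝟙 j₀))
    have h2 : f ≫ pushout.inl (f ≫ D.map (Under.mk (𝟙 j₀)).hom) k
        = k ≫ pushout.inr (f ≫ D.map (Under.mk (𝟙 j₀)).hom) k := by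
      have := pushout.condition (f := f ≫ D.map (Under.mk (𝟙 j₀)).hom) (g := k)
      simpa using this
    rw [Category.assoc, h1, ← Category.assoc, h2, Category.assoc]
  refine IsColimit.mk (fun t => hpo.desc (hres.desc (stageAuxCocone D k f t))
    (pushout.inr _ _ ≫ t.ι.app (Under.mk (𝟙 j₀))) (hcomm t)) (fun t j => ?_) (fun t m hm => ?_)
  · -- fac
    dsimp only
    apply pushout.hom_ext
    · rw [pushout.inl_desc_assoc, Category.assoc, hpo.inl_desc]
      exact hres.fac (stageAuxCocone D k f t) j
    · rw [pushout.inr_desc_assoc, hpo.inr_desc]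
      have ψ : Under.mk (𝟙 j₀) ⟶ j := Under.homMk j.hom (by simp)
      rw [← t.w ψ, ← Category.assoc]
      congr 1
      rw [pushout.inr_desc]
  · -- uniq
    dsimp only
    apply hpo.hom_ext
    · apply hres.hom_ext
      intro j
      rw [hpo.inl_desc]
      have hfac : cb.ι.app j.right ≫ hres.desc (stageAuxCocone D k f t)
          = pushout.inl (f ≫ D.map j.hom) k ≫ t.ι.app j := hres.fac (stageAuxCocone D k f t) j
      show cb.ι.app j.right ≫ l ≫ m = cb.ι.app j.right ≫ hres.desc (stageAuxCocone D k f t)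
      rw [hfac, ← Category.assoc]
      rw [show cb.ι.app j.right ≫ l = pushout.inl (f ≫ D.map j.hom) k
          ≫ (stageCocone D k f cb l c' hpo).ι.app j by exact (pushout.inl_desc _ _ _).symm]
      rw [Category.assoc, hm j]
    · rw [hpo.inr_desc]
      rw [show c' = pushout.inr (f ≫ D.map (Under.mk (𝟙 j₀)).hom) k
          ≫ (stageCocone D k f cb l c' hpo).ι.app (Under.mk (𝟙 j₀)) by exact (pushout.inr_desc _ _ _).symm]
      rw [Category.assoc, hm (Under.mk (𝟙 j₀))]

end Stage


/-- The coslice generator `𝒢_B` is closed under retracts in `B↓ℬ`. -/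
theorem stmt10 {ℬ : Type u} [Category.{v} ℬ] [IsLFP ℬ] {B : ℬ}
    (X Y : Under B) (s : X ⟶ Y) (r : Y ⟶ X) (hrs : s ≫ r = 𝟙 X)
    (hY : InGen Y.hom) : InGen X.hom := by
  obtain ⟨K, K', hK, hK', k, a, c, hpo⟩ := hY
  obtain ⟨S, hSmall, hSfp, hpres⟩ := IsLFP.exists_gen (𝒞 := ℬ)
  obtain ⟨J, sJ, fJ, D, cb, ⟨hcb⟩, hpt, hmem⟩ := hpres B
  subst hpt
  -- factor `a` through a stage of the presentation of `B`
  obtain ⟨j₀, f, hf⟩ := factor_through_stage hcb hK a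
  rw [← hf] at hpo
  -- `Y.right` is the filtered colimit of the stagewise pushouts
  have hSC : IsColimit (stageCocone D k f cb Y.hom c hpo) :=
    stageIsColimit D k f cb Y.hom c hpo hcb
  -- the split idempotent data
  have hsr : s.right ≫ r.right = 𝟙 X.right := by
    have := congrArg CommaMorphism.right hrs; simpa using this
  have heB : Y.hom ≫ r.right ≫ s.right = Y.hom := by
    rw [← Category.assoc, Under.w r, Under.w s]
  -- factor `c ≫ r.right ≫ s.right` through a stage
  obtain ⟨j₁, ut, hut⟩ := factor_through_stage hSC hK' (c ≫ r.right ≫ s.right)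
  have hut' : ut ≫ (stageCocone D k f cb Y.hom c hpo).ι.app j₁ = c ≫ r.right ≫ s.right := hut
  -- abbreviations
  have hinl : pushout.inl (f ≫ D.map j₁.hom) k ≫ (stageCocone D k f cb Y.hom c hpo).ι.app j₁
      = cb.ι.app j₁.right ≫ Y.hom := by exact pushout.inl_desc _ _ _
  have hinrc : pushout.inr (f ≫ D.map j₁.hom) k ≫ (stageCocone D k f cb Y.hom c hpo).ι.app j₁
      = c := by exact pushout.inr_desc _ _ _
  -- finitely presented objects at stage j₁
  have hfpD : IsFinPres (D.obj j₁.right) := hSfp _ (hmem j₁.right)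
  have hfpY : IsFinPres (pushout (f ≫ D.map j₁.hom) k) :=
    isFinPres_pushout hK hfpD hK' (f ≫ D.map j₁.hom) k
  -- the coequalizer at stage j₁
  have hw₂ : ut ≫ (stageCocone D k f cb Y.hom c hpo).ι.app j₁ ≫ r.right
      = pushout.inr (f ≫ D.map j₁.hom) k ≫ (stageCocone D k f cb Y.hom c hpo).ι.app j₁
        ≫ r.right := by
    rw [← Category.assoc, hut', ← Category.assoc (pushout.inr (f ≫ D.map j₁.hom) k), hinrc]
    simp only [Category.assoc, hsr, Category.comp_id]
  have hfpX : IsFinPres (coequalizer ut (pushout.inr (f ≫ D.map j₁.hom) k)) :=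
    isFinPres_coequalizer hK' hfpY _ _
  set p := coequalizer.π ut (pushout.inr (f ≫ D.map j₁.hom) k) with hp
  set c₂ := coequalizer.desc ((stageCocone D k f cb Y.hom c hpo).ι.app j₁ ≫ r.right)
    hw₂ with hc₂
  have hpc₂ : p ≫ c₂ = (stageCocone D k f cb Y.hom c hpo).ι.app j₁ ≫ r.right :=
    coequalizer.π_desc _ _
  refine ⟨D.obj j₁.right, coequalizer ut (pushout.inr (f ≫ D.map j₁.hom) k), hfpD, hfpX,
    pushout.inl (f ≫ D.map j₁.hom) k ≫ p, cb.ι.app j₁.right, c₂, ?_⟩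
  have hsq : CommSq (cb.ι.app j₁.right) (pushout.inl (f ≫ D.map j₁.hom) k ≫ p) X.hom c₂ := by
    constructor
    rw [Category.assoc, hpc₂, ← Category.assoc, hinl, Category.assoc, Under.w r]
  have hwj : D.map j₁.hom ≫ cb.ι.app j₁.right = cb.ι.app j₀ := by simpa using cb.w j₁.hom
  set ι₁ := (stageCocone D k f cb Y.hom c hpo).ι.app j₁ with hι₁
  have main : ∀ sc : PushoutCocone (cb.ι.app j₁.right) (pushout.inl (f ≫ D.map j₁.hom) k ≫ p),
      ∃ d : X.right ⟶ sc.pt, (X.hom ≫ d = sc.inl) ∧ (c₂ ≫ d = sc.inr) ∧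
        ∀ m, X.hom ≫ m = sc.inl → c₂ ≫ m = sc.inr → m = d := by
    intro sc
    have hcompat : (f ≫ cb.ι.app j₀) ≫ sc.inl
        = k ≫ pushout.inr (f ≫ D.map j₁.hom) k ≫ p ≫ sc.inr := by
      rw [← hwj, Category.assoc, Category.assoc, sc.condition, ← Category.assoc, ← Category.assoc,
        ← Category.assoc, pushout.condition]
      simp only [Category.assoc]
    set t' : Y.right ⟶ sc.pt := hpo.desc sc.inl
      (pushout.inr (f ≫ D.map j₁.hom) k ≫ p ≫ sc.inr) hcompat with ht'
    have hY' : Y.hom ≫ t' = sc.inl := hpo.inl_desc _ _ _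
    have hc' : c ≫ t' = pushout.inr (f ≫ D.map j₁.hom) k ≫ p ≫ sc.inr := hpo.inr_desc _ _ _
    have hkey : ι₁ ≫ t' = p ≫ sc.inr := by
      apply pushout.hom_ext
      · rw [← Category.assoc, hinl, Category.assoc, hY', sc.condition]
        simp only [Category.assoc]
      · rw [← Category.assoc, hinrc, hc']
    have hkey2 : (c ≫ r.right ≫ s.right) ≫ t' = c ≫ t' := by
      rw [← hut', Category.assoc, hkey, ← Category.assoc, coequalizer.condition,
        Category.assoc, ← hc']
    have hkey3 : ι₁ ≫ r.right ≫ s.right ≫ t' = ι₁ ≫ t' := by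
      apply pushout.hom_ext
      · have l1 : pushout.inl (f ≫ D.map j₁.hom) k ≫ ι₁ ≫ r.right ≫ s.right ≫ t'
            = cb.ι.app j₁.right ≫ Y.hom ≫ t' := by
          rw [← Category.assoc, hinl, Category.assoc, reassoc_of% heB]
        have l2 : pushout.inl (f ≫ D.map j₁.hom) k ≫ ι₁ ≫ t'
            = cb.ι.app j₁.right ≫ Y.hom ≫ t' := by
          rw [← Category.assoc, hinl, Category.assoc]
        rw [l1, l2]
      · have l3 : pushout.inr (f ≫ D.map j₁.hom) k ≫ ι₁ ≫ t' = c ≫ t' := by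
          rw [← Category.assoc, hinrc]
        have l4 : pushout.inr (f ≫ D.map j₁.hom) k ≫ ι₁ ≫ r.right ≫ s.right ≫ t'
            = (c ≫ r.right ≫ s.right) ≫ t' := by
          rw [← Category.assoc, hinrc]
          simp only [Category.assoc]
        rw [l4, hkey2, l3]
    refine ⟨s.right ≫ t', ?_, ?_, ?_⟩
    · rw [← Category.assoc, Under.w s, hY']
    · rw [← cancel_epi p, ← Category.assoc, ← Category.assoc, hpc₂, Category.assoc,
        Category.assoc, hkey3, hkey]
    · intro m hml hmr
      have hcr : pushout.inr (f ≫ D.map j₁.hom) k ≫ p ≫ c₂ = c ≫ r.right := by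
        rw [hpc₂, ← Category.assoc, hinrc]
      have hrm : r.right ≫ m = t' := by
        apply hpo.hom_ext
        · rw [← Category.assoc, Under.w r, hml, hY']
        · rw [← Category.assoc, ← hcr, Category.assoc, Category.assoc, hmr, hc']
      have hm' : s.right ≫ r.right ≫ m = m := by
        rw [← Category.assoc, hsr, Category.id_comp]
      rw [← hm', hrm]
  exact IsPushout.of_isColimit' hsq (PushoutCocone.IsColimit.mk hsq.w
    (fun sc => (main sc).choose) (fun sc => (main sc).choose_spec.1)
    (fun sc => (main sc).choose_spec.2.1)
    (fun sc m hml hmr => (main sc).choose_spec.2.2 m hml hmr))
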